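/- Let μ ≥ 1 be a real number, let ε ∈ (0, 1], and let τ be a natural number with τ ≥ μ (ln(μ/ε) + 1). Then Σ_{i=τ+1}^{∞} e^{1 − i/μ} = e^{1 − τ/μ} / (e^{1/μ} − 1), and this quantity is strictly less than ε. -/
import Mathlib


open Real

/-- For a real `μ ≥ 1`, `ε ∈ (0, 1]` and a natural number `τ ≥ μ (ln (μ / ε) + 1)`,
the geometric tail sum `∑_{i=τ+1}^{∞} e^{1 - i/μ}` equals
`e^{1 - τ/μ} / (e^{1/μ} - 1)`, and this quantity is strictly less than `ε`. -/
theorem stmt_3 (μ ε : ℝ) (hμ : 1 ≤ μ) (hε : ε ∈ Set.Ioc (0 : ℝ) 1)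
    (τ : ℕ) (hτ : μ * (Real.log (μ / ε) + 1) ≤ (τ : ℝ)) :
    (∑' j : ℕ, Real.exp (1 - ((τ : ℝ) + 1 + (j : ℝ)) / μ))
      = Real.exp (1 - (τ : ℝ) / μ) / (Real.exp (1 / μ) - 1) ∧
    Real.exp (1 - (τ : ℝ) / μ) / (Real.exp (1 / μ) - 1) < ε := by
  have hμ0 : 0 < μ := lt_of_lt_of_le one_pos hμ
  have hε0 : 0 < ε := hε.1
  have hr1 : Real.exp (-(1/μ)) < 1 := by
    rw [Real.exp_lt_one_iff]
    have : (0:ℝ) < 1/μ := by positivity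
    linarith
  have hr0 : 0 ≤ Real.exp (-(1/μ)) := (Real.exp_pos _).le
  have hgt : 1 < Real.exp (1/μ) := by
    rw [Real.one_lt_exp_iff]
    positivity
  have hdpos : 0 < Real.exp (1/μ) - 1 := by linarith
  have hsum : (∑' j : ℕ, Real.exp (1 - ((τ : ℝ) + 1 + (j : ℝ)) / μ))
      = Real.exp (1 - (τ : ℝ) / μ) / (Real.exp (1 / μ) - 1) := by
    have h1 : ∀ j : ℕ, Real.exp (1 - ((τ : ℝ) + 1 + (j : ℝ)) / μ)
        = Real.exp (1 - ((τ : ℝ) + 1) / μ) * (Real.exp (-(1/μ)))^j := by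
      intro j
      rw [← Real.exp_nat_mul, ← Real.exp_add]
      ring_nf
    simp_rw [h1]
    rw [tsum_mul_left, tsum_geometric_of_lt_one hr0 hr1, ← div_eq_mul_inv,
      div_eq_div_iff (by linarith) (ne_of_gt hdpos)]
    have e1 : rexp (1 - ((τ:ℝ)+1)/μ) * rexp (1/μ) = rexp (1 - (τ:ℝ)/μ) := by
      rw [← Real.exp_add]; congr 1; field_simp; ring
    have e2 : rexp (1 - (τ:ℝ)/μ) * rexp (-(1/μ)) = rexp (1 - ((τ:ℝ)+1)/μ) := by
      rw [← Real.exp_add]; congr 1; field_simp; ring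
    linear_combination e1 + e2
  refine ⟨hsum, ?_⟩
  -- strict bound: e^{1/μ} - 1 > 1/μ
  have hexp : 1/μ + 1 < Real.exp (1/μ) := by
    have := Real.add_one_lt_exp (x := 1/μ) (by positivity)
    linarith
  have hnum : Real.exp (1 - (τ : ℝ) / μ) ≤ ε / μ := by
    rw [← Real.exp_log (show 0 < ε/μ by positivity), Real.exp_le_exp]
    have hlog : Real.log (ε/μ) = - Real.log (μ/ε) := by
      rw [← Real.log_inv]
      congr 1
      field_simp
    rw [hlog]
    have : μ * (Real.log (μ / ε) + 1) ≤ (τ:ℝ) := hτ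
    have h2 : 1 + Real.log (μ/ε) ≤ (τ:ℝ)/μ := by
      rw [le_div_iff₀ hμ0]; nlinarith
    linarith
  calc Real.exp (1 - (τ : ℝ) / μ) / (Real.exp (1 / μ) - 1)
      ≤ (ε/μ) / (Real.exp (1 / μ) - 1) := by
        gcongr
    _ < (ε/μ) / (1/μ) := by
        apply div_lt_div_of_pos_left (by positivity) (by positivity) (by linarith)
    _ = ε := by field_simp
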